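/- Let (Z, λ) be an equiconnected space and A ⊆ Z a nonempty set. Then for every n ≥ 1, λ^{n−1}(A) = {λ_n(x_1,…,x_n, α_1,…,α_n) : (x_1,…,x_n) ∈ A^n, (α_1,…,α_n) ∈ S_n}; that is, the iterated set λ^{n−1}(A) coincides with the set of all convex combinations of n elements of A. -/

import Mathlib

open Set Function Filter Topology

universe u

/-- An *equiconnecting* map on `Z`: a map `λ : Z × Z × [0,1] → Z`, continuous on
`Z × Z × [0,1]`, with `λ(x,y,0) = x`, `λ(x,y,1) = y` and `λ(x,x,t) = x`. -/
structure IsEquiconnecting {Z : Type*} [TopologicalSpace Z] (lam : Z → Z → ℝ → Z) : Prop where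
  continuousOn : ContinuousOn (fun p : Z × Z × ℝ => lam p.1 p.2.1 p.2.2)
    (Set.univ ×ˢ Set.univ ×ˢ Set.Icc (0 : ℝ) 1)
  map_zero : ∀ x y : Z, lam x y 0 = x
  map_one : ∀ x y : Z, lam x y 1 = y
  map_diag : ∀ x : Z, ∀ t ∈ Set.Icc (0 : ℝ) 1, lam x x t = x

/-- `lambdaIter lam n` is the map `λ_{n+1} : Z^{n+1} × S_{n+1} → Z` from the paper,
defined recursively. -/
noncomputable def lambdaIter {Z : Type*} (lam : Z → Z → ℝ → Z) :
    (n : ℕ) → (Fin (n + 1) → Z) → (Fin (n + 1) → ℝ) → Z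
  | 0, x, _ => x 0
  | n + 1, x, a =>
      if 0 < a 0 + a 1 then
        lambdaIter lam n
          (Fin.cons (lam (x 0) (x 1) (a 1 / (a 0 + a 1))) fun i => x i.succ.succ)
          (Fin.cons (a 0 + a 1) fun i => a i.succ.succ)
      else
        lambdaIter lam n (fun i => x i.succ) fun i => a i.succ

/-- `lambdaIterSet lam A n` is the set `λ^n(A)`:  `λ^0(A) = A` and
`λ^{n+1}(A) = λ(λ^n(A) × A × [0,1])`. -/
def lambdaIterSet {Z : Type*} (lam : Z → Z → ℝ → Z) (A : Set Z) : ℕ → Set Z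
  | 0 => A
  | n + 1 => (fun p : Z × Z × ℝ => lam p.1 p.2.1 p.2.2) ''
      (lambdaIterSet lam A n ×ˢ A ×ˢ Set.Icc (0 : ℝ) 1)

/-- `λ^∞(A) = ⋃_{n ≥ 1} λ^n(A)`. -/
def lambdaInftySet {Z : Type*} (lam : Z → Z → ℝ → Z) (A : Set Z) : Set Z :=
  ⋃ n : ℕ, lambdaIterSet lam A (n + 1)

/-- An equiconnected space `(Z, λ)` is locally convex if every point has arbitrarily small
neighborhoods `V` with `λ^∞(V)` inside a given neighborhood. -/
def IsLocallyConvexEquiconnected {Z : Type*} [TopologicalSpace Z] (lam : Z → Z → ℝ → Z) :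
    Prop :=
  ∀ z : Z, ∀ U ∈ nhds z, ∃ V ∈ nhds z, lambdaInftySet lam V ⊆ U

/-- A map is Baire-one if it is the pointwise limit of a sequence of continuous maps. -/
def BaireOne {Y Z : Type*} [TopologicalSpace Y] [TopologicalSpace Z] (g : Y → Z) : Prop :=
  ∃ h : ℕ → Y → Z, (∀ n, Continuous (h n)) ∧
    ∀ y, Filter.Tendsto (fun n => h n y) Filter.atTop (nhds (g y))

/-- A locally finite partition of unity on `X`: continuous `[0,1]`-valued functions whose
supports (closures of the sets where they are nonzero) form a locally finite family and whose
pointwise sum is `1`. -/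
def IsLocFinPartitionOfUnity {I X : Type*} [TopologicalSpace X] (φ : I → X → ℝ) : Prop :=
  (∀ i, Continuous (φ i)) ∧ (∀ i x, φ i x ∈ Set.Icc (0 : ℝ) 1) ∧
    (LocallyFinite fun i => closure (Function.support (φ i))) ∧ ∀ x, ∑ᶠ i, φ i x = 1

/-- A strong PP-space: for every dense `D ⊆ X` there are a sequence of locally finite
partitions of unity and families of points of `D` such that points attached to the supports
containing `x` converge to `x` uniformly in the index, in the sense of condition (3). -/
def IsStrongPPSpace (X : Type*) [TopologicalSpace X] : Prop :=
  ∀ D : Set X, Dense D →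
    ∃ (I : ℕ → Type u) (φ : ∀ n, I n → X → ℝ) (p : ∀ n, I n → X),
      (∀ n, IsLocFinPartitionOfUnity (φ n)) ∧ (∀ n i, p n i ∈ D) ∧
      ∀ x : X, ∀ U ∈ nhds x, ∃ n₀ : ℕ, ∀ n ≥ n₀, ∀ i : I n,
        x ∈ closure (Function.support (φ n i)) → p n i ∈ U

/-- A zero set: the preimage of `{0}` under a continuous function `X → [0,1]`. -/
def IsZeroSet {X : Type*} [TopologicalSpace X] (A : Set X) : Prop :=
  ∃ f : X → ℝ, Continuous f ∧ (∀ x, f x ∈ Set.Icc (0 : ℝ) 1) ∧ A = f ⁻¹' {0}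

/-- A cozero set: the preimage of `(0,1]` under a continuous function `X → [0,1]`. -/
def IsCozeroSet {X : Type*} [TopologicalSpace X] (A : Set X) : Prop :=
  ∃ f : X → ℝ, Continuous f ∧ (∀ x, f x ∈ Set.Icc (0 : ℝ) 1) ∧ A = f ⁻¹' Set.Ioc (0 : ℝ) 1

/-- A functionally ambiguous set: simultaneously a countable union of zero sets and a
countable intersection of cozero sets. -/
def IsFunctionallyAmbiguous {X : Type*} [TopologicalSpace X] (A : Set X) : Prop :=
  (∃ F : ℕ → Set X, (∀ n, IsZeroSet (F n)) ∧ A = ⋃ n, F n) ∧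
    ∃ B : ℕ → Set X, (∀ n, IsCozeroSet (B n)) ∧ A = ⋂ n, B n

/-- A discrete family of sets: every point has a neighborhood meeting at most one member. -/
def IsDiscreteFamily {I X : Type*} [TopologicalSpace X] (A : I → Set X) : Prop :=
  ∀ x : X, ∃ U ∈ nhds x, {i : I | (U ∩ A i).Nonempty}.Subsingleton

/-- Weakly collectionwise normal: every discrete family of zero sets can be separated by a
discrete family of cozero sets. -/
def WeaklyCollectionwiseNormal (X : Type*) [TopologicalSpace X] : Prop :=
  ∀ (S : Type u) (F : S → Set X), (∀ s, IsZeroSet (F s)) → IsDiscreteFamily F →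
    ∃ U : S → Set X, (∀ s, IsCozeroSet (U s)) ∧ IsDiscreteFamily U ∧ ∀ s, F s ⊆ U s

/-- A contracting structure on `Z`: a continuous `γ : Z × [0,1] → Z` with `γ(z,0) = z` and
`γ(z,1) = z₀`. -/
structure IsContracting {Z : Type*} [TopologicalSpace Z] (γ : Z → ℝ → Z) (z₀ : Z) :
    Prop where
  continuousOn : ContinuousOn (fun p : Z × ℝ => γ p.1 p.2) (Set.univ ×ˢ Set.Icc (0 : ℝ) 1)
  map_zero : ∀ z : Z, γ z 0 = z
  map_one : ∀ z : Z, γ z 1 = z₀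

-- snoc ∘ succ lemma
lemma snoc_succ {Z : Type*} {n : ℕ} (x : Fin (n+1) → Z) (y : Z) :
    (fun i : Fin (n+1) => (Fin.snoc x y : Fin (n+2) → Z) i.succ) = (Fin.snoc (fun i : Fin n => x i.succ) y : Fin (n+1) → Z) := by
  funext i
  induction i using Fin.lastCases with
  | last => simp [Fin.succ_last]
  | cast k => rw [Fin.succ_castSucc]; simp only [Fin.snoc_castSucc]

lemma lambdaIter_const {Z : Type*} {lam : Z → Z → ℝ → Z}
    (hdiag : ∀ x : Z, ∀ t ∈ Set.Icc (0 : ℝ) 1, lam x x t = x) :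
    ∀ (n : ℕ) (y : Z) (a : Fin (n+1) → ℝ), a ∈ stdSimplex ℝ (Fin (n+1)) →
      lambdaIter lam n (fun _ => y) a = y := by
  intro n
  induction n with
  | zero => intro y a _; rfl
  | succ n ih =>
    intro y a ha
    have ha0 := ha.1
    simp only [lambdaIter]
    split_ifs with h
    · have hd : lam y y (a 1 / (a 0 + a 1)) = y := by
        apply hdiag
        constructor
        · exact div_nonneg (ha0 1) h.le
        · rw [div_le_one h]; linarith [ha0 0]
      have hx : (Fin.cons (lam y y (a 1 / (a 0 + a 1))) fun _ : Fin n => y)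
          = (fun _ : Fin (n+1) => y) := by
        funext i
        induction i using Fin.cases with
        | zero => simpa using hd
        | succ k => simp
      have ha' : (Fin.cons (a 0 + a 1) fun i : Fin n => a i.succ.succ)
          ∈ stdSimplex ℝ (Fin (n+1)) := by
        constructor
        · intro i
          induction i using Fin.cases with
          | zero => simpa using add_nonneg (ha0 0) (ha0 1)
          | succ k => simpa using ha0 k.succ.succ
        · rw [Fin.sum_cons]
          have := ha.2
          rw [Fin.sum_univ_succ, Fin.sum_univ_succ] at this
          simpa [add_assoc] using this
      exact (congrArg (fun f => lambdaIter lam n f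
        (Fin.cons (a 0 + a 1) fun i => a i.succ.succ)) hx).trans (ih y _ ha')
    · apply ih
      constructor
      · intro i; exact ha0 i.succ
      · have h0 : a 0 = 0 := by
          have := ha0 0; have := ha0 1; push_neg at h; linarith
        have := ha.2
        rw [Fin.sum_univ_succ, h0, zero_add] at this
        exact this

lemma lambdaIter_snoc {Z : Type*} (lam : Z → Z → ℝ → Z) :
    ∀ (n : ℕ) (x : Fin (n+1) → Z) (a : Fin (n+1) → ℝ), a ∈ stdSimplex ℝ (Fin (n+1)) →
      ∀ (y : Z) (t : ℝ), t < 1 →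
      lambdaIter lam (n+1) (Fin.snoc x y) (Fin.snoc (fun i => (1-t) * a i) t)
        = lam (lambdaIter lam n x a) y t := by
  intro n
  induction n with
  | zero =>
    intro x a ha y t ht
    have ha0 : a 0 = 1 := by
      have := ha.2; rwa [Fin.sum_univ_one] at this
    simp only [lambdaIter]
    rw [if_pos]
    · simp only [Fin.snoc, Fin.cons]
      norm_num [ha0, Fin.castPred_zero]
    · simp only [Fin.snoc]
      norm_num [ha0, Fin.castPred_zero]
  | succ n ih =>
    intro x a ha y t ht
    set b : Fin (n+2) → ℝ := fun i => (1-t) * a i with hb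
    have e0 : (Fin.snoc b t : Fin (n+3) → ℝ) 0 = b 0 := by
      rw [show (0 : Fin (n+3)) = Fin.castSucc 0 by simp, Fin.snoc_castSucc]
    have e1 : (Fin.snoc b t : Fin (n+3) → ℝ) 1 = b 1 := by
      rw [show (1 : Fin (n+3)) = Fin.castSucc 1 by simp, Fin.snoc_castSucc]
    have f0 : (Fin.snoc x y : Fin (n+3) → Z) 0 = x 0 := by
      rw [show (0 : Fin (n+3)) = Fin.castSucc 0 by simp, Fin.snoc_castSucc]
    have f1 : (Fin.snoc x y : Fin (n+3) → Z) 1 = x 1 := by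
      rw [show (1 : Fin (n+3)) = Fin.castSucc 1 by simp, Fin.snoc_castSucc]
    have ht' : (0:ℝ) < 1 - t := by linarith
    have hbsum : b 0 + b 1 = (1-t) * (a 0 + a 1) := by simp only [hb]; ring
    have hx2 : (fun i : Fin (n+1) => (Fin.snoc x y : Fin (n+3) → Z) i.succ.succ)
        = (Fin.snoc (fun i : Fin n => x i.succ.succ) y : Fin (n+1) → Z) := by
      funext i
      rw [congrFun (snoc_succ x y) i.succ, congrFun (snoc_succ (fun j : Fin (n+1) => x j.succ) y) i]
    have ha2 : (fun i : Fin (n+1) => (Fin.snoc b t : Fin (n+3) → ℝ) i.succ.succ)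
        = (Fin.snoc (fun i : Fin n => b i.succ.succ) t : Fin (n+1) → ℝ) := by
      funext i
      rw [congrFun (snoc_succ b t) i.succ, congrFun (snoc_succ (fun j : Fin (n+1) => b j.succ) t) i]
    rw [lambdaIter]
    simp only [e0, e1, f0, f1]
    by_cases h : 0 < a 0 + a 1
    · have hbpos : 0 < b 0 + b 1 := by rw [hbsum]; positivity
      rw [if_pos hbpos]
      conv_rhs => rw [lambdaIter]
      rw [if_pos h]
      have hrat : b 1 / (b 0 + b 1) = a 1 / (a 0 + a 1) := by
        rw [hbsum, hb]
        exact mul_div_mul_left _ _ (ne_of_gt ht')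
      rw [hrat, hx2, ha2, Fin.cons_snoc_eq_snoc_cons, Fin.cons_snoc_eq_snoc_cons, hbsum]
      have har : (Fin.cons (a 0 + a 1) fun i : Fin n => a i.succ.succ)
          ∈ stdSimplex ℝ (Fin (n+1)) := by
        constructor
        · intro i
          induction i using Fin.cases with
          | zero => simpa using add_nonneg (ha.1 0) (ha.1 1)
          | succ k => simpa using ha.1 k.succ.succ
        · rw [Fin.sum_cons]
          have := ha.2
          rw [Fin.sum_univ_succ, Fin.sum_univ_succ] at this
          simpa [add_assoc] using this
      have hcons : (Fin.cons ((1-t) * (a 0 + a 1)) fun i : Fin n => b i.succ.succ)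
          = fun i : Fin (n+1) =>
            (1-t) * (Fin.cons (a 0 + a 1) (fun i : Fin n => a i.succ.succ) : Fin (n+1) → ℝ) i := by
        funext i
        induction i using Fin.cases with
        | zero => simp
        | succ k => simp [Fin.cons_succ, hb]
      rw [hcons]
      exact ih _ _ har y t ht
    · have hsum0 : a 0 + a 1 = 0 := le_antisymm (not_lt.mp h) (add_nonneg (ha.1 0) (ha.1 1))
      have ha00 : a 0 = 0 := by have h0 := ha.1 0; have h1 := ha.1 1; linarith
      have hbneg : ¬ 0 < b 0 + b 1 := by
        rw [hbsum, hsum0, mul_zero]; exact lt_irrefl 0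
      rw [if_neg hbneg]
      conv_rhs => rw [lambdaIter]
      rw [if_neg h, snoc_succ x y, snoc_succ b t,
        show (fun i : Fin (n+1) => b i.succ) = fun i => (1-t) * a i.succ from
          by funext i; rw [hb]]
      refine ih (fun i => x i.succ) (fun i => a i.succ) ⟨fun i => ha.1 i.succ, ?_⟩ y t ht
      have := ha.2
      rwa [Fin.sum_univ_succ, ha00, zero_add] at this

lemma lambdaIterSet_subset_succ {Z : Type*} {lam : Z → Z → ℝ → Z}
    (hzero : ∀ x y : Z, lam x y 0 = x) {A : Set Z} (hA : A.Nonempty) (j : ℕ) :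
    lambdaIterSet lam A j ⊆ lambdaIterSet lam A (j+1) := by
  intro z hz
  obtain ⟨y, hy⟩ := hA
  exact ⟨(z, y, 0), ⟨hz, hy, ⟨le_refl 0, zero_le_one⟩⟩, hzero z y⟩

lemma lambdaIterSet_mono {Z : Type*} {lam : Z → Z → ℝ → Z}
    (hzero : ∀ x y : Z, lam x y 0 = x) {A : Set Z} (hA : A.Nonempty) {j l : ℕ} (h : j ≤ l) :
    lambdaIterSet lam A j ⊆ lambdaIterSet lam A l := by
  induction l with
  | zero => rw [Nat.le_zero.mp h]
  | succ l ih =>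
    rcases Nat.lt_or_ge j (l+1) with hl | hl
    · exact (ih (Nat.lt_succ_iff.mp hl)).trans (lambdaIterSet_subset_succ hzero hA l)
    · rw [le_antisymm h hl]

lemma lambdaIter_mem_iterSet {Z : Type*} {lam : Z → Z → ℝ → Z}
    (hzero : ∀ x y : Z, lam x y 0 = x) {A : Set Z} (hA : A.Nonempty) :
    ∀ (m k : ℕ) (x : Fin (m+1) → Z) (a : Fin (m+1) → ℝ), a ∈ stdSimplex ℝ (Fin (m+1)) →
      x 0 ∈ lambdaIterSet lam A k → (∀ i : Fin m, x i.succ ∈ A) →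
      lambdaIter lam m x a ∈ lambdaIterSet lam A (k + m) := by
  intro m
  induction m with
  | zero => intro k x a _ hx0 _; exact hx0
  | succ m ih =>
    intro k x a ha hx0 hxs
    rw [lambdaIter]
    by_cases h : 0 < a 0 + a 1
    · rw [if_pos h]
      have hx1 : x 1 ∈ A := by
        have := hxs 0
        rwa [Fin.succ_zero_eq_one] at this
      have hx'0 : lam (x 0) (x 1) (a 1 / (a 0 + a 1)) ∈ lambdaIterSet lam A (k+1) :=
        ⟨(x 0, x 1, a 1 / (a 0 + a 1)), ⟨hx0, hx1,
          ⟨div_nonneg (ha.1 1) h.le, by rw [div_le_one h]; linarith [ha.1 0]⟩⟩, rfl⟩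
      have har : (Fin.cons (a 0 + a 1) fun i : Fin m => a i.succ.succ)
          ∈ stdSimplex ℝ (Fin (m+1)) := by
        constructor
        · intro i
          induction i using Fin.cases with
          | zero => simpa using add_nonneg (ha.1 0) (ha.1 1)
          | succ k => simpa using ha.1 k.succ.succ
        · rw [Fin.sum_cons]
          have := ha.2
          rw [Fin.sum_univ_succ, Fin.sum_univ_succ] at this
          simpa [add_assoc] using this
      have := ih (k+1)
        (Fin.cons (lam (x 0) (x 1) (a 1 / (a 0 + a 1))) fun i : Fin m => x i.succ.succ) _ har
        (by rw [Fin.cons_zero]; exact hx'0)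
        (fun i => by rw [Fin.cons_succ]; exact hxs i.succ)
      rwa [show k + 1 + m = k + (m + 1) by omega] at this
    · rw [if_neg h]
      have := ih 0 (fun i => x i.succ) (fun i => a i.succ)
        ⟨fun i => ha.1 i.succ, by
          have h0 : a 0 = 0 := by
            have h1 := ha.1 0; have h2 := ha.1 1; push_neg at h; linarith
          have := ha.2
          rwa [Fin.sum_univ_succ, h0, zero_add] at this⟩
        (hxs 0) (fun i => hxs i.succ)
      rw [zero_add] at this
      exact lambdaIterSet_mono hzero hA (by omega) this

lemma lambdaIterSet_subset_comb {Z : Type*} [TopologicalSpace Z] {lam : Z → Z → ℝ → Z}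
    (hlam : IsEquiconnecting lam) {A : Set Z} :
    ∀ (n : ℕ) (z : Z), z ∈ lambdaIterSet lam A n →
      ∃ (x : Fin (n + 1) → Z) (a : Fin (n + 1) → ℝ),
        (∀ i, x i ∈ A) ∧ a ∈ stdSimplex ℝ (Fin (n + 1)) ∧ z = lambdaIter lam n x a := by
  intro n
  induction n with
  | zero =>
    intro z hz
    exact ⟨fun _ => z, fun _ => 1, fun _ => hz,
      ⟨fun _ => zero_le_one, by rw [Fin.sum_univ_one]⟩, rfl⟩
  | succ n ih =>
    rintro z ⟨⟨w, y, t⟩, ⟨hw, hy, ht0, ht1⟩, rfl⟩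
    rcases eq_or_lt_of_le ht1 with h1 | h1
    · refine ⟨fun _ => y, Pi.single 0 1, fun _ => hy, single_mem_stdSimplex ℝ 0, ?_⟩
      show lam w y t = _
      rw [show t = (1:ℝ) from h1, hlam.map_one]
      exact (lambdaIter_const hlam.map_diag (n+1) y _ (single_mem_stdSimplex ℝ 0)).symm
    · obtain ⟨x, a, hxA, ha, rfl⟩ := ih w hw
      refine ⟨Fin.snoc x y, Fin.snoc (fun i => (1-t) * a i) t, ?_, ⟨?_, ?_⟩, ?_⟩
      · intro i
        induction i using Fin.lastCases with
        | last => simpa using hy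
        | cast j => simpa using hxA j
      · intro i
        induction i using Fin.lastCases with
        | last => simpa using ht0
        | cast j =>
          rw [Fin.snoc_castSucc]
          exact mul_nonneg (by linarith) (ha.1 j)
      · rw [Fin.sum_univ_castSucc]
        simp only [Fin.snoc_castSucc, Fin.snoc_last]
        rw [← Finset.mul_sum, ha.2]
        ring
      · exact (lambdaIter_snoc lam n x a ha y t h1).symm

/-- For a nonempty subset `A` of an equiconnected space `(Z, λ)` and `n ≥ 1`,
`λ^{n-1}(A)` is exactly the set of all convex combinations of `n` elements of `A`.
(Here `lambdaIterSet lam A n = λ^n(A)` and `lambdaIter lam n` is `λ_{n+1}`, so the statement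
is instantiated at `n + 1` points.) -/
theorem lambdaIterSet_eq_combinations {Z : Type*} [TopologicalSpace Z] (lam : Z → Z → ℝ → Z)
    (hlam : IsEquiconnecting lam) (A : Set Z) (hA : A.Nonempty) (n : ℕ) :
    lambdaIterSet lam A n =
      {z : Z | ∃ (x : Fin (n + 1) → Z) (a : Fin (n + 1) → ℝ),
        (∀ i, x i ∈ A) ∧ a ∈ stdSimplex ℝ (Fin (n + 1)) ∧ z = lambdaIter lam n x a} := by
  ext z
  constructor
  · exact fun hz => lambdaIterSet_subset_comb hlam n z hz
  · rintro ⟨x, a, hxA, ha, rfl⟩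
    have := lambdaIter_mem_iterSet hlam.map_zero hA n 0 x a ha (hxA 0) (fun i => hxA i.succ)
    rwa [zero_add] at this
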